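/- (Proposition 3, second part.) Let N be a finite set of voters, f a neutral and strategy-proof full-domain rule, and S = (S_1,…,S_K) a sequence of nonempty, pairwise distinct subsets of N with S_K a singleton. Then the sequential unanimity rule with default f, 𝒮^f, is well-defined (the candidate x in its defining condition is unique when it exists), and 𝒮^f is neutral and strategy-proof. -/
import Mathlib


/-- A rule is strategy-proof if whenever a voter's misreport would give his true
preference, truthful reporting gives it as well. -/
def StrategyProof {N : Type*} [DecidableEq N] (f : (N → Bool) → Bool) : Prop :=
  ∀ (R : N → Bool) (i : N) (b : Bool), f (Function.update R i b) = R i → f R = R i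

/-- A rule is neutral if it commutes with flipping the two candidates. -/
def Neutral {N : Type*} (f : (N → Bool) → Bool) : Prop :=
  ∀ R : N → Bool, f (fun i => !(R i)) = !(f R)

/-- An M-winning coalition set: nonempty, members nonempty, minimality (P1),
and Moulin's property (P2). -/
def IsMWCS {N : Type*} [DecidableEq N] (𝒞 : Set (Finset N)) : Prop :=
  𝒞.Nonempty ∧ (∀ C ∈ 𝒞, C.Nonempty) ∧
    (∀ C ∈ 𝒞, ∀ C' ∈ 𝒞, C ⊆ C' → C = C') ∧
    (∀ C : Finset N, (∃ C' ∈ 𝒞, C' ⊆ C) ↔ ∀ C'' ∈ 𝒞, (C ∩ C'').Nonempty)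

/-- `f` is the M-winning coalition rule associated with `𝒞`. -/
def IsMWCRule {N : Type*} (𝒞 : Set (Finset N)) (f : (N → Bool) → Bool) : Prop :=
  ∀ (R : N → Bool) (x : Bool), f R = x ↔ ∃ C ∈ 𝒞, ∀ i ∈ C, R i = x

/-- `g` is the sequential unanimity rule associated with the sequence `S`. -/
def IsSURule {N : Type*} {K : ℕ} (S : Fin K → Finset N) (g : (N → Bool) → Bool) : Prop :=
  ∀ (R : N → Bool) (x : Bool),
    g R = x ↔ ∃ k : Fin K, (∀ i ∈ S k, R i = x) ∧
      ∀ l < k, ∃ i ∈ S l, ∃ j ∈ S l, R i ≠ R j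

/-- A full-domain rule is neutral if it commutes with flipping the two candidates
(indifference/ties are mapped to themselves). -/
def FullNeutral {N : Type*} (g : (N → Option Bool) → Option Bool) : Prop :=
  ∀ R : N → Option Bool, g (fun i => Option.map not (R i)) = Option.map not (g R)

/-- The ranking of outcomes by a voter with strict preference for `x`:
`some x ≻ none ≻ some (!x)`. -/
def rankOutcome (x : Bool) : Option Bool → ℕ
  | none => 1
  | some y => if y = x then 2 else 0

/-- A full-domain rule is strategy-proof if no voter with a strict preference can
obtain a strictly better-ranked outcome by misreporting. -/
def FullStrategyProof {N : Type*} [DecidableEq N]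
    (g : (N → Option Bool) → Option Bool) : Prop :=
  ∀ (R : N → Option Bool) (i : N) (x : Bool), R i = some x →
    ∀ r : Option Bool, rankOutcome x (g (Function.update R i r)) ≤ rankOutcome x (g R)

/-- `g` is the M-winning coalition rule with default `f` associated with `𝒞`. -/
def IsMWCFullRule {N : Type*} (𝒞 : Set (Finset N))
    (f g : (N → Option Bool) → Option Bool) : Prop :=
  ∀ R : N → Option Bool,
    (∀ x : Bool, (∃ C ∈ 𝒞, ∀ i ∈ C, R i = some x) → g R = some x) ∧
    ((¬ ∃ x : Bool, ∃ C ∈ 𝒞, ∀ i ∈ C, R i = some x) → g R = f R)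

/-- `g` is the sequential unanimity rule with default `f` associated with `S`. -/
def IsSUFullRule {N : Type*} {K : ℕ} (S : Fin K → Finset N)
    (f g : (N → Option Bool) → Option Bool) : Prop :=
  ∀ R : N → Option Bool,
    (∀ x : Bool, (∃ k : Fin K, (∀ i ∈ S k, R i = some x) ∧
        ∀ l < k, ∃ i ∈ S l, R i = some x) → g R = some x) ∧
    ((¬ ∃ x : Bool, ∃ k : Fin K, (∀ i ∈ S k, R i = some x) ∧
        ∀ l < k, ∃ i ∈ S l, R i = some x) → g R = f R)

/-- Proposition 3 (second part): the sequential unanimity rule with a neutral,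
strategy-proof default is well-defined (the selected strict candidate is unique when it
exists), neutral, and strategy-proof. -/
theorem stmt13 {N : Type*} [Fintype N] [DecidableEq N] {K : ℕ}
    (S : Fin (K + 1) → Finset N) (hne : ∀ k, (S k).Nonempty)
    (hinj : Function.Injective S) (hlast : (S (Fin.last K)).card = 1)
    (f : (N → Option Bool) → Option Bool)
    (hfN : FullNeutral f) (hfSP : FullStrategyProof f) :
    (∀ (R : N → Option Bool) (x y : Bool),
        (∃ k : Fin (K + 1), (∀ i ∈ S k, R i = some x) ∧
          ∀ l < k, ∃ i ∈ S l, R i = some x) →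
        (∃ k : Fin (K + 1), (∀ i ∈ S k, R i = some y) ∧
          ∀ l < k, ∃ i ∈ S l, R i = some y) → x = y) ∧
    (∀ g : (N → Option Bool) → Option Bool,
        IsSUFullRule S f g → FullNeutral g ∧ FullStrategyProof g) := by
  classical
  -- abbreviation for the selection predicate
  set P : (N → Option Bool) → Bool → Prop :=
    fun R x => ∃ k : Fin (K + 1), (∀ i ∈ S k, R i = some x) ∧
      ∀ l < k, ∃ i ∈ S l, R i = some x with hP
  have key : ∀ (R : N → Option Bool) (x y : Bool), P R x → P R y → x = y := by
    rintro R x y ⟨k, hkx, hkl⟩ ⟨m, hmy, hml⟩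
    rcases lt_trichotomy k m with h | h | h
    · obtain ⟨i, hi, hiy⟩ := hml k h
      have := hkx i hi
      rw [this] at hiy; exact (Option.some_inj.mp hiy)
    · obtain ⟨i, hi⟩ := hne k
      have h1 := hkx i hi
      have h2 := hmy i (h ▸ hi)
      rw [h1] at h2; exact Option.some_inj.mp h2
    · obtain ⟨i, hi, hix⟩ := hkl m h
      have := hmy i hi
      rw [this] at hix; exact (Option.some_inj.mp hix).symm
  refine ⟨key, ?_⟩
  intro g hg
  have flipP : ∀ (R : N → Option Bool) (x : Bool),
      P (fun i => Option.map not (R i)) x ↔ P R (!x) := by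
    intro R x
    have hmem : ∀ i : N, Option.map not (R i) = some x ↔ R i = some (!x) := by
      intro i
      cases h : R i with
      | none => simp
      | some b => cases b <;> cases x <;> simp
    constructor
    · rintro ⟨k, hk, hkl⟩
      exact ⟨k, fun i hi => (hmem i).mp (hk i hi),
        fun l hl => by obtain ⟨i, hi, hix⟩ := hkl l hl; exact ⟨i, hi, (hmem i).mp hix⟩⟩
    · rintro ⟨k, hk, hkl⟩
      exact ⟨k, fun i hi => (hmem i).mpr (hk i hi),
        fun l hl => by obtain ⟨i, hi, hix⟩ := hkl l hl; exact ⟨i, hi, (hmem i).mpr hix⟩⟩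
  constructor
  · -- neutrality
    intro R
    by_cases hex : ∃ y : Bool, P R y
    · obtain ⟨y, hy⟩ := hex
      have h1 : g R = some y := (hg R).1 y hy
      have h2 : g (fun i => Option.map not (R i)) = some (!y) := by
        exact (hg _).1 (!y) ((flipP R (!y)).mpr (by simpa using hy))
      rw [h1, h2]; rfl
    · have hex' : ¬ ∃ y : Bool, P (fun i => Option.map not (R i)) y := by
        rintro ⟨y, hy⟩
        exact hex ⟨!y, (flipP R y).mp hy⟩
      have h1 : g R = f R := (hg R).2 hex
      have h2 : g (fun i => Option.map not (R i)) = f (fun i => Option.map not (R i)) :=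
        (hg _).2 hex'
      rw [h1, h2, hfN R]
  · -- strategy-proofness
    intro R i x hix r
    set R' := Function.update R i r with hR'
    have hrank2 : ∀ o : Option Bool, rankOutcome x o ≤ 2 := by
      intro o; cases o with
      | none => simp [rankOutcome]
      | some b => simp only [rankOutcome]; split <;> omega
    have hxne : (some x : Option Bool) ≠ some (!x) := by cases x <;> simp
    by_cases h1 : P R x
    · have : g R = some x := (hg R).1 x h1
      rw [this]
      have : rankOutcome x (some x) = 2 := by simp [rankOutcome]
      rw [this]; exact hrank2 _
    by_cases h2 : P R (!x)
    · -- g R = some (!x); show g R' = some (!x) too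
      obtain ⟨k, hk, hkl⟩ := h2
      have h2' : P R' (!x) := by
        refine ⟨k, fun j hj => ?_, fun l hl => ?_⟩
        · have hj' := hk j hj
          have hji : j ≠ i := by rintro rfl; rw [hix] at hj'; exact hxne hj'
          rw [hR', Function.update_of_ne hji]; exact hj'
        · obtain ⟨j, hj, hjx⟩ := hkl l hl
          have hji : j ≠ i := by rintro rfl; rw [hix] at hjx; exact hxne hjx
          exact ⟨j, hj, by rw [hR', Function.update_of_ne hji]; exact hjx⟩
      have hg2 : g R' = some (!x) := (hg R').1 (!x) h2'
      rw [hg2]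
      have : rankOutcome x (some (!x)) = 0 := by cases x <;> simp [rankOutcome]
      rw [this]; exact Nat.zero_le _
    · -- no condition holds for R
      have hex : ¬ ∃ y : Bool, P R y := by
        rintro ⟨y, hy⟩
        rcases Bool.eq_or_eq_not y x with rfl | rfl
        · exact h1 hy
        · exact h2 hy
      have hgR : g R = f R := (hg R).2 hex
      have hnotx : ¬ P R' x := by
        rintro ⟨k, hk, hkl⟩
        refine h1 ⟨k, fun j hj => ?_, fun l hl => ?_⟩
        · by_cases hji : j = i
          · subst hji; exact hix
          · have := hk j hj; rwa [hR', Function.update_of_ne hji] at this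
        · obtain ⟨j, hj, hjx⟩ := hkl l hl
          by_cases hji : j = i
          · subst hji; exact ⟨j, hj, hix⟩
          · exact ⟨j, hj, by rwa [hR', Function.update_of_ne hji] at hjx⟩
      by_cases hex' : ∃ y : Bool, P R' y
      · obtain ⟨y, hy⟩ := hex'
        have hyx : y = !x := by
          rcases Bool.eq_or_eq_not y x with rfl | rfl
          · exact absurd hy hnotx
          · rfl
        subst hyx
        have : g R' = some (!x) := (hg R').1 (!x) hy
        rw [this]
        have : rankOutcome x (some (!x)) = 0 := by cases x <;> simp [rankOutcome]
        rw [this]; exact Nat.zero_le _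
      · have hgR' : g R' = f R' := (hg R').2 hex'
        rw [hgR, hgR']
        exact hfSP R i x hix r
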